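/- Let J ⊆ {1,...,x} be a finite set of integers with x ≥ 2, and let U ≤ |J| be a positive real. Then |J|² · log x + |J| · (sum of log p over primes p ≤ U) > the sum over primes p ≤ U of (log p) · (sum over c from 0 to p-1 of |J(c,p)|²), where J(c,p) is the number of elements of J congruent to c mod p. -/

import Mathlib

open Finset

lemma sum_log_primeFactors_le {d : ℕ} (hd : 0 < d) {S : Finset ℕ}
    (hS : S ⊆ d.primeFactors) : ∑ p ∈ S, Real.log p ≤ Real.log d := by
  have hpos : ∀ p ∈ S, (0:ℝ) < p := fun p hp => by
    exact_mod_cast (Nat.prime_of_mem_primeFactors (hS hp)).pos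
  rw [← Real.log_prod (s := S) (f := fun p : ℕ => (p:ℝ)) (fun p hp => ne_of_gt (hpos p hp))]
  have h1 : (∏ p ∈ S, p) ∣ d :=
    (Finset.prod_dvd_prod_of_subset _ _ _ hS).trans (Nat.prod_primeFactors_dvd d)
  have h2 : (∏ p ∈ S, p) ≤ d := Nat.le_of_dvd hd h1
  have hcast : ((∏ p ∈ S, p : ℕ) : ℝ) = ∏ p ∈ S, (p:ℝ) := by push_cast; ring
  rw [← hcast]
  have hpp : 0 < (∏ p ∈ S, p : ℕ) :=
    Finset.prod_pos fun p hp => (Nat.prime_of_mem_primeFactors (hS hp)).pos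
  exact Real.log_le_log (by exact_mod_cast hpp) (by exact_mod_cast h2)

lemma sum_ite_log_le {x : ℕ} (hx : 2 ≤ x) {a b : ℕ} (hab : a < b) (hbx : b ≤ x)
    (P : Finset ℕ) (hP : ∀ p ∈ P, p.Prime) :
    ∑ p ∈ P, (if a % p = b % p then Real.log p else 0) ≤ Real.log x := by
  set d := b - a with hd
  have hd0 : 0 < d := Nat.sub_pos_of_lt hab
  rw [Finset.sum_ite, Finset.sum_const_zero, add_zero]
  have hsub : P.filter (fun p => a % p = b % p) ⊆ d.primeFactors := by
    intro p hp
    rw [Finset.mem_filter] at hp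
    refine Nat.mem_primeFactors.mpr ⟨hP p hp.1, ?_, hd0.ne'⟩
    exact (Nat.modEq_iff_dvd' hab.le).mp hp.2
  refine (sum_log_primeFactors_le hd0 hsub).trans ?_
  refine Real.log_le_log (by exact_mod_cast hd0) ?_
  exact_mod_cast (Nat.sub_le b a).trans hbx

theorem stmt_12 (x : ℕ) (hx : 2 ≤ x) (J : Finset ℕ) (hJ : J ⊆ Finset.Icc 1 x)
    (U : ℝ) (hU0 : 0 < U) (hU : U ≤ J.card) :
    (J.card : ℝ) ^ 2 * Real.log x
        + (J.card : ℝ) * ∑ p ∈ (Finset.range (⌊U⌋₊ + 1)).filter Nat.Prime, Real.log p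
      > ∑ p ∈ (Finset.range (⌊U⌋₊ + 1)).filter Nat.Prime,
          Real.log p * ∑ c ∈ Finset.range p, ((J.filter (fun j => j % p = c)).card : ℝ) ^ 2 := by
  set P := (Finset.range (⌊U⌋₊ + 1)).filter Nat.Prime with hPdef
  have hPprime : ∀ p ∈ P, p.Prime := fun p hp => (Finset.mem_filter.mp hp).2
  set L := ∑ p ∈ P, Real.log p with hL
  have hcard1 : 1 ≤ J.card := by
    by_contra h
    push_neg at h
    have : J.card = 0 := Nat.lt_one_iff.mp h
    rw [this] at hU
    exact absurd (hU0.trans_le hU) (by norm_num)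
  have hlogx : 0 < Real.log x := Real.log_pos (by exact_mod_cast hx)
  -- Step 1: rewrite each inner sum as a double sum over pairs
  have key : ∀ p ∈ P,
      ∑ c ∈ Finset.range p, ((J.filter (fun j => j % p = c)).card : ℝ) ^ 2
        = ∑ j1 ∈ J, ∑ j2 ∈ J, (if j1 % p = j2 % p then (1:ℝ) else 0) := by
    intro p hp
    have hp0 : 0 < p := (hPprime p hp).pos
    have hcardf : ∀ c, ((J.filter (fun j => j % p = c)).card : ℝ)
        = ∑ j ∈ J, (if j % p = c then (1:ℝ) else 0) := by
      intro c
      rw [Finset.card_filter]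
      push_cast
      rfl
    calc ∑ c ∈ Finset.range p, ((J.filter (fun j => j % p = c)).card : ℝ) ^ 2
        = ∑ c ∈ Finset.range p, ∑ j1 ∈ J, ∑ j2 ∈ J,
            (if j1 % p = c then (1:ℝ) else 0) * (if j2 % p = c then (1:ℝ) else 0) := by
          refine Finset.sum_congr rfl fun c _ => ?_
          rw [sq, hcardf c, Finset.sum_mul_sum]
      _ = ∑ j1 ∈ J, ∑ j2 ∈ J, ∑ c ∈ Finset.range p,
            (if j1 % p = c then (1:ℝ) else 0) * (if j2 % p = c then (1:ℝ) else 0) := by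
          rw [Finset.sum_comm]
          exact Finset.sum_congr rfl fun j1 _ => Finset.sum_comm
      _ = ∑ j1 ∈ J, ∑ j2 ∈ J, (if j1 % p = j2 % p then (1:ℝ) else 0) := by
          refine Finset.sum_congr rfl fun j1 _ => Finset.sum_congr rfl fun j2 _ => ?_
          have hmem : j1 % p ∈ Finset.range p := Finset.mem_range.mpr (Nat.mod_lt _ hp0)
          rw [Finset.sum_eq_single (j1 % p)]
          · by_cases h : j1 % p = j2 % p <;> simp [h, eq_comm]
          · intro c _ hc
            simp [Ne.symm hc]
          · intro h; exact absurd hmem h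
  -- Step 2: swap sums
  have swap : ∑ p ∈ P, Real.log p *
        ∑ c ∈ Finset.range p, ((J.filter (fun j => j % p = c)).card : ℝ) ^ 2
      = ∑ j1 ∈ J, ∑ j2 ∈ J, ∑ p ∈ P, (if j1 % p = j2 % p then Real.log p else 0) := by
    have step1 : ∑ p ∈ P, Real.log p *
        ∑ c ∈ Finset.range p, ((J.filter (fun j => j % p = c)).card : ℝ) ^ 2
        = ∑ p ∈ P, ∑ j1 ∈ J, ∑ j2 ∈ J, (if j1 % p = j2 % p then Real.log p else 0) := by
      refine Finset.sum_congr rfl fun p hp => ?_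
      rw [key p hp, Finset.mul_sum]
      refine Finset.sum_congr rfl fun j1 _ => ?_
      rw [Finset.mul_sum]
      refine Finset.sum_congr rfl fun j2 _ => ?_
      by_cases h : j1 % p = j2 % p <;> simp [h]
    rw [step1, Finset.sum_comm]
    exact Finset.sum_congr rfl fun j1 _ => Finset.sum_comm
  rw [swap]
  -- Step 3: bound each term
  have hbound : ∀ j1 ∈ J, ∀ j2 ∈ J,
      ∑ p ∈ P, (if j1 % p = j2 % p then Real.log p else 0)
        ≤ Real.log x + (if j1 = j2 then L - Real.log x else 0) := by
    intro j1 hj1 j2 hj2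
    by_cases h : j1 = j2
    · subst h
      simp [hL]
    · simp only [h, if_false, add_zero]
      have hx1 : j1 ≤ x := (Finset.mem_Icc.mp (hJ hj1)).2
      have hx2 : j2 ≤ x := (Finset.mem_Icc.mp (hJ hj2)).2
      rcases lt_or_gt_of_ne h with hlt | hgt
      · exact sum_ite_log_le hx hlt hx2 P hPprime
      · have := sum_ite_log_le hx hgt hx1 P hPprime
        calc ∑ p ∈ P, (if j1 % p = j2 % p then Real.log p else 0)
            = ∑ p ∈ P, (if j2 % p = j1 % p then Real.log p else 0) := by
              exact Finset.sum_congr rfl fun p _ => if_congr eq_comm rfl rfl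
          _ ≤ Real.log x := this
  have hsum_le : ∑ j1 ∈ J, ∑ j2 ∈ J, ∑ p ∈ P, (if j1 % p = j2 % p then Real.log p else 0)
      ≤ ∑ j1 ∈ J, ∑ j2 ∈ J, (Real.log x + (if j1 = j2 then L - Real.log x else 0)) := by
    refine Finset.sum_le_sum fun j1 hj1 => Finset.sum_le_sum fun j2 hj2 => hbound j1 hj1 j2 hj2
  have hsum_eq : ∑ j1 ∈ J, ∑ j2 ∈ J, (Real.log x + (if j1 = j2 then L - Real.log x else 0))
      = (J.card : ℝ) ^ 2 * Real.log x + (J.card : ℝ) * L - (J.card : ℝ) * Real.log x := by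
    have : ∀ j1 ∈ J, ∑ j2 ∈ J, (Real.log x + (if j1 = j2 then L - Real.log x else 0))
        = (J.card : ℝ) * Real.log x + (L - Real.log x) := by
      intro j1 hj1
      rw [Finset.sum_add_distrib, Finset.sum_const, Finset.sum_ite_eq J j1 (fun _ => L - Real.log x)]
      simp [hj1]
    rw [Finset.sum_congr rfl this, Finset.sum_const]
    push_cast
    ring
  refine lt_of_le_of_lt (hsum_le.trans hsum_eq.le) ?_
  have : 0 < (J.card : ℝ) * Real.log x := by
    apply mul_pos _ hlogx
    exact_mod_cast hcard1
  linarith
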